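/- arXiv:0810.2352 — 2 statements merged into one kernel-verified Lean document; each statement's English description precedes it below -/
import Mathlib

section
/- Let (U1^n, V1^n) consist of n i.i.d. copies of a pair (U1, V1) of finitely-valued random variables, let X1^n be any finitely-valued random sequence and Y1^n any finitely-valued random sequence such that the Markov chains U1^n -> X1^n -> Y1^n and V1^n -> U1^n -> Y1^n hold, and let Uhat1^n = g(Y1^n, V1^n) for an arbitrary function g. Then (1/n) I(X1^n; Y1^n) >= H(U1|V1) - (1/n) H(U1^n | Uhat1^n). -/
open Finset Real Filter
open scoped Classical

namespace Paper

/-- `p` is a probability mass function on the finite type `α`. -/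
def IsPMF {α : Type*} [Fintype α] (p : α → ℝ) : Prop :=
  (∀ a, 0 ≤ p a) ∧ ∑ a, p a = 1

/-- `k` is a transition probability (channel) from `α` to the finite type `β`. -/
def IsKernel {α β : Type*} [Fintype β] (k : α → β → ℝ) : Prop :=
  ∀ a, IsPMF (k a)

variable {Ω : Type*} [Fintype Ω]

/-- Probability that the random variable `X` takes the value `x`, under the weight `p`. -/
noncomputable def pr {α : Type*} (p : Ω → ℝ) (X : Ω → α) (x : α) : ℝ :=
  ∑ ω, if X ω = x then p ω else 0

/-- Shannon entropy (base 2) of the random variable `X` under `p`. -/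
noncomputable def ent {α : Type*} [Fintype α] (p : Ω → ℝ) (X : Ω → α) : ℝ :=
  ∑ x, -(pr p X x * Real.logb 2 (pr p X x))

/-- Conditional entropy `H(X|Y) = H(X,Y) - H(Y)`. -/
noncomputable def condEnt {α β : Type*} [Fintype α] [Fintype β]
    (p : Ω → ℝ) (X : Ω → α) (Y : Ω → β) : ℝ :=
  ent p (fun ω => (X ω, Y ω)) - ent p Y

/-- Mutual information `I(X;Y) = H(X) + H(Y) - H(X,Y)`. -/
noncomputable def mi {α β : Type*} [Fintype α] [Fintype β]
    (p : Ω → ℝ) (X : Ω → α) (Y : Ω → β) : ℝ :=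
  ent p X + ent p Y - ent p (fun ω => (X ω, Y ω))

/-- Conditional mutual information `I(X;Y|Z) = H(X,Z) + H(Y,Z) - H(X,Y,Z) - H(Z)`. -/
noncomputable def cmi {α β γ : Type*} [Fintype α] [Fintype β] [Fintype γ]
    (p : Ω → ℝ) (X : Ω → α) (Y : Ω → β) (Z : Ω → γ) : ℝ :=
  ent p (fun ω => (X ω, Z ω)) + ent p (fun ω => (Y ω, Z ω))
    - ent p (fun ω => (X ω, Y ω, Z ω)) - ent p Z

/-- The Markov chain `A → B → C`: `A` and `C` are conditionally independent given `B`. -/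
def MarkovChain {α β γ : Type*} (p : Ω → ℝ) (A : Ω → α) (B : Ω → β) (C : Ω → γ) : Prop :=
  ∀ a b c, pr p (fun ω => (A ω, B ω, C ω)) (a, b, c) * pr p B b =
    pr p (fun ω => (A ω, B ω)) (a, b) * pr p (fun ω => (B ω, C ω)) (b, c)

noncomputable def phi (t : ℝ) : ℝ := -(t * Real.logb 2 t)

lemma neg_sum_mul {β : Type*} [Fintype β] (f : β → ℝ) (L : ℝ) :
    -((∑ y, f y) * L) = ∑ y, -(f y * L) := by
  rw [Finset.sum_mul]
  exact (Finset.sum_neg_distrib _).symm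

lemma phi_sum_eq {β : Type*} [Fintype β] (f : β → ℝ) :
    phi (∑ y, f y) = ∑ y, -(f y * Real.logb 2 (∑ y', f y')) := neg_sum_mul f _

lemma log_ratio_ge (a b : ℝ) (ha : 0 ≤ a) (hb : 0 ≤ b) (h : a ≠ 0 → 0 < b) :
    (a - b) / Real.log 2 ≤ a * (Real.logb 2 a - Real.logb 2 b) := by
  have hl2 : (0:ℝ) < Real.log 2 := Real.log_pos (by norm_num)
  rcases eq_or_lt_of_le ha with rfl | ha'
  · simp only [zero_mul, zero_sub]
    exact div_nonpos_of_nonpos_of_nonneg (neg_nonpos.2 hb) hl2.le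
  · have hb' : 0 < b := h (ne_of_gt ha')
    have hlog : Real.log b - Real.log a ≤ b / a - 1 := by
      have := Real.log_le_sub_one_of_pos (show (0:ℝ) < b / a by positivity)
      rwa [Real.log_div hb'.ne' ha'.ne'] at this
    have key : a - b ≤ a * (Real.log a - Real.log b) := by
      have h2 : a * (Real.log b - Real.log a) ≤ a * (b / a - 1) :=
        mul_le_mul_of_nonneg_left hlog ha'.le
      have h3 : a * (b / a - 1) = b - a := by field_simp
      nlinarith
    have : a * (Real.logb 2 a - Real.logb 2 b) = (a * (Real.log a - Real.log b)) / Real.log 2 := by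
      rw [Real.logb, Real.logb]; ring
    rw [this]
    gcongr

lemma cmi_core {α β γ : Type*} [Fintype α] [Fintype β] [Fintype γ]
    (P : α → β → γ → ℝ) (h0 : ∀ x y z, 0 ≤ P x y z)
    (h1 : ∑ x, ∑ y, ∑ z, P x y z = 1) :
    (∑ x, ∑ y, ∑ z, phi (P x y z)) + (∑ z, phi (∑ x, ∑ y, P x y z))
      ≤ (∑ x, ∑ z, phi (∑ y, P x y z)) + (∑ y, ∑ z, phi (∑ x, P x y z)) := by
  have hl2 : (0:ℝ) < Real.log 2 := Real.log_pos (by norm_num)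
  set A : α → γ → ℝ := fun x z => ∑ y, P x y z with hA
  set B : β → γ → ℝ := fun y z => ∑ x, P x y z with hB
  set C : γ → ℝ := fun z => ∑ x, ∑ y, P x y z with hC
  have hA0 : ∀ x z, 0 ≤ A x z := fun x z => Finset.sum_nonneg fun y _ => h0 x y z
  have hB0 : ∀ y z, 0 ≤ B y z := fun y z => Finset.sum_nonneg fun x _ => h0 x y z
  have hC0 : ∀ z, 0 ≤ C z := fun z => Finset.sum_nonneg fun x _ => hA0 x z
  have e1 : ∑ x, ∑ z, phi (A x z) = ∑ x, ∑ y, ∑ z, -(P x y z * Real.logb 2 (A x z)) := by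
    refine Finset.sum_congr rfl fun x _ => ?_
    refine Eq.trans ?_ (Finset.sum_comm)
    exact Finset.sum_congr rfl fun z _ => phi_sum_eq _
  have e2 : ∑ y, ∑ z, phi (B y z) = ∑ x, ∑ y, ∑ z, -(P x y z * Real.logb 2 (B y z)) := by
    refine Eq.trans ?_ (Finset.sum_comm)
    refine Finset.sum_congr rfl fun y _ => ?_
    refine Eq.trans ?_ (Finset.sum_comm)
    exact Finset.sum_congr rfl fun z _ => phi_sum_eq _
  have e3 : ∑ z, phi (C z) = ∑ x, ∑ y, ∑ z, -(P x y z * Real.logb 2 (C z)) := by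
    have step : ∑ z, phi (C z) = ∑ z, ∑ x, ∑ y, -(P x y z * Real.logb 2 (C z)) := by
      refine Finset.sum_congr rfl fun z _ => ?_
      refine Eq.trans (phi_sum_eq _) ?_
      exact Finset.sum_congr rfl fun x _ => (neg_sum_mul _ _)
    rw [step]
    rw [Finset.sum_comm]
    exact Finset.sum_congr rfl fun x _ => Finset.sum_comm

  -- termwise Gibbs bound
  have keyterm : ∀ x y z, (P x y z - A x z * B y z / C z) / Real.log 2 ≤
      -(P x y z * Real.logb 2 (A x z)) + -(P x y z * Real.logb 2 (B y z))
        - (phi (P x y z) + -(P x y z * Real.logb 2 (C z))) := by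
    intro x y z
    rcases eq_or_lt_of_le (h0 x y z) with hP | hP
    · rw [← hP]
      have hD : 0 ≤ A x z * B y z / C z := by
        have := hA0 x z; have := hB0 y z; have := hC0 z; positivity
      have h' : (0 - A x z * B y z / C z) / Real.log 2 ≤ 0 :=
        div_nonpos_of_nonpos_of_nonneg (by linarith) hl2.le
      refine le_trans h' ?_
      simp [phi]
    · have hAp : 0 < A x z :=
        lt_of_lt_of_le hP (Finset.single_le_sum (fun y' _ => h0 x y' z) (Finset.mem_univ y))
      have hBp : 0 < B y z :=
        lt_of_lt_of_le hP (Finset.single_le_sum (fun x' _ => h0 x' y z) (Finset.mem_univ x))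
      have hCp : 0 < C z :=
        lt_of_lt_of_le hAp (Finset.single_le_sum (fun x' _ => hA0 x' z) (Finset.mem_univ x))
      have hD : 0 < A x z * B y z / C z := by positivity
      have hkey := log_ratio_ge (P x y z) (A x z * B y z / C z) hP.le hD.le (fun _ => hD)
      rw [Real.logb_div (by positivity) hCp.ne', Real.logb_mul hAp.ne' hBp.ne'] at hkey
      refine le_of_le_of_eq hkey ?_
      simp only [phi]
      ring
  -- sum of the lower bounds
  have hsumD : ∑ x, ∑ y, ∑ z, A x z * B y z / C z ≤ 1 := by
    have hreord : ∑ x, ∑ y, ∑ z, A x z * B y z / C z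
        = ∑ z, ∑ x, ∑ y, A x z * B y z / C z :=
      Eq.trans (Finset.sum_congr rfl fun _ _ => Finset.sum_comm) Finset.sum_comm
    rw [hreord]
    have hz : ∀ z, ∑ x, ∑ y, A x z * B y z / C z ≤ C z := by
      intro z
      have : ∑ x, ∑ y, A x z * B y z / C z = (C z) * (C z) / C z := by
        rw [show (∑ x, ∑ y, A x z * B y z / C z) = (∑ x, A x z) * (∑ y, B y z) / C z by
          rw [Finset.sum_mul_sum]
          rw [Finset.sum_div]
          exact Finset.sum_congr rfl fun x _ => by rw [Finset.sum_div]]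
        have hAa : (∑ x, A x z) = C z := rfl
        have hBb : (∑ y, B y z) = C z := Finset.sum_comm
        rw [hAa, hBb]
      rw [this]
      rcases eq_or_lt_of_le (hC0 z) with h | h
      · rw [← h]; norm_num
      · rw [mul_div_assoc, div_self h.ne', mul_one]
    calc ∑ z, ∑ x, ∑ y, A x z * B y z / C z ≤ ∑ z, C z := Finset.sum_le_sum fun z _ => hz z
      _ = 1 := by
          rw [hC]
          rw [show (∑ z, ∑ x, ∑ y, P x y z) = ∑ x, ∑ y, ∑ z, P x y z from
            Eq.trans Finset.sum_comm (Finset.sum_congr rfl fun _ _ => Finset.sum_comm)]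
          exact h1
  have hlow : (0:ℝ) ≤ ∑ x, ∑ y, ∑ z,
      (-(P x y z * Real.logb 2 (A x z)) + -(P x y z * Real.logb 2 (B y z))
        - (phi (P x y z) + -(P x y z * Real.logb 2 (C z)))) := by
    have step1 : ∑ x, ∑ y, ∑ z, (P x y z - A x z * B y z / C z) / Real.log 2 ≤ _ :=
      Finset.sum_le_sum fun x _ => Finset.sum_le_sum fun y _ => Finset.sum_le_sum fun z _ =>
        keyterm x y z
    refine le_trans ?_ step1
    have : ∑ x, ∑ y, ∑ z, (P x y z - A x z * B y z / C z) / Real.log 2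
        = ((∑ x, ∑ y, ∑ z, P x y z) - ∑ x, ∑ y, ∑ z, A x z * B y z / C z) / Real.log 2 := by
      simp only [← Finset.sum_div, ← Finset.sum_sub_distrib]
    rw [this, h1]
    exact div_nonneg (by linarith) hl2.le
  rw [e1, e2, e3] at *
  have comb : (∑ x, ∑ y, ∑ z, -(P x y z * Real.logb 2 (A x z)))
      + (∑ x, ∑ y, ∑ z, -(P x y z * Real.logb 2 (B y z)))
      - ((∑ x, ∑ y, ∑ z, phi (P x y z)) + (∑ x, ∑ y, ∑ z, -(P x y z * Real.logb 2 (C z))))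
      = ∑ x, ∑ y, ∑ z,
        (-(P x y z * Real.logb 2 (A x z)) + -(P x y z * Real.logb 2 (B y z))
          - (phi (P x y z) + -(P x y z * Real.logb 2 (C z)))) := by
    simp only [← Finset.sum_add_distrib, ← Finset.sum_sub_distrib]
  rw [← comb] at hlow
  linarith

lemma markov_core {α β γ : Type*} [Fintype α] [Fintype β] [Fintype γ]
    (P : α → β → γ → ℝ) (h0 : ∀ a b c, 0 ≤ P a b c)
    (hM : ∀ a b c, P a b c * (∑ a', ∑ c', P a' b c') = (∑ c', P a b c') * (∑ a', P a' b c)) :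
    (∑ a, ∑ b, phi (∑ c, P a b c)) + (∑ b, ∑ c, phi (∑ a, P a b c))
      = (∑ a, ∑ b, ∑ c, phi (P a b c)) + (∑ b, phi (∑ a, ∑ c, P a b c)) := by
  set AB : α → β → ℝ := fun a b => ∑ c, P a b c with hAB
  set BC : β → γ → ℝ := fun b c => ∑ a, P a b c with hBC
  set Bm : β → ℝ := fun b => ∑ a, ∑ c, P a b c with hBm
  have eAB : ∑ a, ∑ b, phi (AB a b) = ∑ a, ∑ b, ∑ c, -(P a b c * Real.logb 2 (AB a b)) :=
    Finset.sum_congr rfl fun a _ => Finset.sum_congr rfl fun b _ => phi_sum_eq _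
  have eBC : ∑ b, ∑ c, phi (BC b c) = ∑ a, ∑ b, ∑ c, -(P a b c * Real.logb 2 (BC b c)) := by
    refine Eq.trans ?_ (Finset.sum_comm)
    refine Finset.sum_congr rfl fun b _ => ?_
    refine Eq.trans (Finset.sum_congr rfl fun c _ => phi_sum_eq _) ?_
    exact Finset.sum_comm
  have eB : ∑ b, phi (Bm b) = ∑ a, ∑ b, ∑ c, -(P a b c * Real.logb 2 (Bm b)) := by
    refine Eq.trans ?_ (Finset.sum_comm)
    refine Finset.sum_congr rfl fun b _ => ?_
    refine Eq.trans (phi_sum_eq _) ?_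
    exact Finset.sum_congr rfl fun a _ => neg_sum_mul _ _
  have term0 : ∀ a b c, -(P a b c * Real.logb 2 (AB a b)) + -(P a b c * Real.logb 2 (BC b c))
      = phi (P a b c) + -(P a b c * Real.logb 2 (Bm b)) := by
    intro a b c
    rcases eq_or_lt_of_le (h0 a b c) with hP | hP
    · rw [← hP]; simp [phi]
    · have hABp : 0 < AB a b :=
        lt_of_lt_of_le hP (Finset.single_le_sum (fun c' _ => h0 a b c') (Finset.mem_univ c))
      have hBCp : 0 < BC b c :=
        lt_of_lt_of_le hP (Finset.single_le_sum (fun a' _ => h0 a' b c) (Finset.mem_univ a))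
      have hBmp : 0 < Bm b := lt_of_lt_of_le hABp
        (Finset.single_le_sum (fun a' _ => Finset.sum_nonneg fun c' _ => h0 a' b c')
          (Finset.mem_univ a))
      have h' := congrArg (Real.logb 2) (hM a b c)
      rw [Real.logb_mul hP.ne' hBmp.ne', Real.logb_mul hABp.ne' hBCp.ne'] at h'
      simp only [phi]
      linear_combination P a b c * h'
  rw [eAB, eBC, eB]
  simp only [← Finset.sum_add_distrib]
  exact Finset.sum_congr rfl fun a _ => Finset.sum_congr rfl fun b _ =>
    Finset.sum_congr rfl fun c _ => term0 a b c


lemma phi_mul (x y : ℝ) : phi (x * y) = y * phi x + x * phi y := by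
  rcases eq_or_ne x 0 with rfl | hx
  · simp [phi]
  rcases eq_or_ne y 0 with rfl | hy
  · simp [phi]
  rw [phi, phi, phi, Real.logb, Real.logb, Real.logb, Real.log_mul hx hy]
  ring


section ProdEnt

variable {δ : Type*} [Fintype δ]

def consE (δ : Type*) (n : ℕ) : δ × (Fin n → δ) ≃ (Fin (n + 1) → δ) where
  toFun := fun t => Fin.cons t.1 t.2
  invFun := fun x => (x 0, fun i => x i.succ)
  left_inv := fun t => by simp
  right_inv := fun x => by
    funext i
    refine Fin.cases ?_ ?_ i <;> simp

lemma sum_phi_prod (n : ℕ) (f : δ → ℝ) (hf1 : ∑ a, f a = 1) :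
    ∑ x : Fin n → δ, phi (∏ i, f (x i)) = n * ∑ a, phi (f a) := by
  induction n with
  | zero =>
    simp [phi]
  | succ n ih =>
    have h1 : ∑ x : Fin (n + 1) → δ, phi (∏ i, f (x i))
        = ∑ t : δ × (Fin n → δ), phi (∏ i, f ((Fin.cons t.1 t.2 : Fin (n+1) → δ) i)) :=
      (Fintype.sum_equiv (consE δ n)
        (fun t : δ × (Fin n → δ) => phi (∏ i, f ((Fin.cons t.1 t.2 : Fin (n+1) → δ) i)))
        (fun x => phi (∏ i, f (x i))) (fun t => rfl)).symm
    have h2 : ∀ t : δ × (Fin n → δ),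
        (∏ i, f ((Fin.cons t.1 t.2 : Fin (n+1) → δ) i)) = f t.1 * ∏ i, f (t.2 i) := by
      intro t
      rw [Fin.prod_univ_succ]
      simp
    rw [h1, Finset.sum_congr rfl fun t _ => by rw [h2 t]]
    rw [Fintype.sum_prod_type]
    have h3 : ∀ a : δ, ∑ x : Fin n → δ, phi (f a * ∏ i, f (x i))
        = (∑ x : Fin n → δ, ∏ i, f (x i)) * phi (f a) + f a * (n * ∑ b, phi (f b)) := by
      intro a
      rw [← ih]
      rw [Finset.sum_congr rfl fun x _ => phi_mul (f a) (∏ i, f (x i))]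
      rw [Finset.sum_add_distrib, ← Finset.sum_mul, ← Finset.mul_sum]
    rw [Finset.sum_congr rfl fun a _ => h3 a]
    have h4 : ∑ x : Fin n → δ, ∏ i, f (x i) = 1 := by
      rw [← Fintype.sum_pow f n, hf1, one_pow]
    rw [Finset.sum_add_distrib, ← Finset.sum_mul, ← Finset.mul_sum]
    rw [h4, hf1]
    push_cast
    ring
end ProdEnt

set_option linter.unusedSectionVars false
set_option linter.unusedVariables false

section Transfer
variable {α β γ δ : Type*} [Fintype α] [Fintype β] [Fintype γ] [Fintype δ]
variable {p : Ω → ℝ}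

lemma ent_def (X : Ω → α) : ent p X = ∑ x, phi (pr p X x) := rfl

lemma pr_nonneg (hp0 : ∀ ω, 0 ≤ p ω) (X : Ω → α) (x : α) : 0 ≤ pr p X x :=
  Finset.sum_nonneg fun ω _ => by by_cases h : X ω = x <;> simp [h, hp0 ω]

lemma sum_pr (hp : IsPMF p) (X : Ω → α) : ∑ x, pr p X x = 1 := by
  unfold pr
  rw [Finset.sum_comm]
  simp [Finset.sum_ite_eq, hp.2]

lemma pr_marg_12 (A : Ω → α) (B : Ω → β) (C : Ω → γ) (a : α) (b : β) :
    pr p (fun ω => (A ω, B ω)) (a, b) = ∑ c, pr p (fun ω => (A ω, B ω, C ω)) (a, b, c) := by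
  unfold pr
  rw [Finset.sum_comm]
  refine Finset.sum_congr rfl fun ω _ => ?_
  by_cases h1 : A ω = a <;> by_cases h2 : B ω = b <;>
    simp [Prod.ext_iff, h1, h2]

lemma pr_marg_13 (A : Ω → α) (B : Ω → β) (C : Ω → γ) (a : α) (c : γ) :
    pr p (fun ω => (A ω, C ω)) (a, c) = ∑ b, pr p (fun ω => (A ω, B ω, C ω)) (a, b, c) := by
  unfold pr
  rw [Finset.sum_comm]
  refine Finset.sum_congr rfl fun ω _ => ?_
  by_cases h1 : A ω = a <;> by_cases h2 : C ω = c <;>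
    simp [Prod.ext_iff, h1, h2]

lemma pr_marg_23 (A : Ω → α) (B : Ω → β) (C : Ω → γ) (b : β) (c : γ) :
    pr p (fun ω => (B ω, C ω)) (b, c) = ∑ a, pr p (fun ω => (A ω, B ω, C ω)) (a, b, c) := by
  unfold pr
  rw [Finset.sum_comm]
  refine Finset.sum_congr rfl fun ω _ => ?_
  by_cases h1 : B ω = b <;> by_cases h2 : C ω = c <;>
    simp [Prod.ext_iff, h1, h2]

lemma pr_marg_2 (A : Ω → α) (B : Ω → β) (C : Ω → γ) (b : β) :
    pr p B b = ∑ a, ∑ c, pr p (fun ω => (A ω, B ω, C ω)) (a, b, c) := by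
  calc pr p B b = ∑ ω, ∑ a, ∑ c, if A ω = a ∧ B ω = b ∧ C ω = c then p ω else 0 := by
        refine Finset.sum_congr rfl fun ω _ => ?_
        by_cases h1 : B ω = b <;> simp [h1, ite_and, Finset.sum_ite_eq]
    _ = ∑ a, ∑ ω, ∑ c, if A ω = a ∧ B ω = b ∧ C ω = c then p ω else 0 := Finset.sum_comm
    _ = ∑ a, ∑ c, ∑ ω, if A ω = a ∧ B ω = b ∧ C ω = c then p ω else 0 :=
        Finset.sum_congr rfl fun a _ => Finset.sum_comm
    _ = ∑ a, ∑ c, pr p (fun ω => (A ω, B ω, C ω)) (a, b, c) := by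
        refine Finset.sum_congr rfl fun a _ => Finset.sum_congr rfl fun c _ => ?_
        unfold pr
        exact Finset.sum_congr rfl fun ω _ => by simp only [Prod.mk.injEq]

lemma pr_marg_3 (A : Ω → α) (B : Ω → β) (C : Ω → γ) (c : γ) :
    pr p C c = ∑ a, ∑ b, pr p (fun ω => (A ω, B ω, C ω)) (a, b, c) := by
  calc pr p C c = ∑ ω, ∑ a, ∑ b, if A ω = a ∧ B ω = b ∧ C ω = c then p ω else 0 := by
        refine Finset.sum_congr rfl fun ω _ => ?_
        by_cases h1 : C ω = c <;> simp [h1, ite_and, Finset.sum_ite_eq]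
    _ = ∑ a, ∑ ω, ∑ b, if A ω = a ∧ B ω = b ∧ C ω = c then p ω else 0 := Finset.sum_comm
    _ = ∑ a, ∑ b, ∑ ω, if A ω = a ∧ B ω = b ∧ C ω = c then p ω else 0 :=
        Finset.sum_congr rfl fun a _ => Finset.sum_comm
    _ = ∑ a, ∑ b, pr p (fun ω => (A ω, B ω, C ω)) (a, b, c) := by
        refine Finset.sum_congr rfl fun a _ => Finset.sum_congr rfl fun b _ => ?_
        unfold pr
        exact Finset.sum_congr rfl fun ω _ => by simp only [Prod.mk.injEq]

lemma pr_snd (A : Ω → α) (B : Ω → β) (b : β) :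
    pr p B b = ∑ a, pr p (fun ω => (A ω, B ω)) (a, b) := by
  unfold pr
  rw [Finset.sum_comm]
  refine Finset.sum_congr rfl fun ω _ => ?_
  by_cases h1 : B ω = b <;> simp [Prod.ext_iff, h1]

lemma ent_comp_inj (W : Ω → α) (f : α → δ) (hf : Function.Injective f) :
    ent p (fun ω => f (W ω)) = ent p W := by
  rw [ent_def, ent_def]
  rw [← Finset.sum_subset (Finset.subset_univ ((Finset.univ : Finset α).map ⟨f, hf⟩))
    (fun d _ hd => ?_)]
  · rw [Finset.sum_map]
    refine Finset.sum_congr rfl fun a _ => ?_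
    congr 1
    exact Finset.sum_congr rfl fun ω _ => by simp [hf.eq_iff]
  · have : pr p (fun ω => f (W ω)) d = 0 := by
      refine Finset.sum_eq_zero fun ω _ => if_neg fun h => ?_
      exact hd (Finset.mem_map.2 ⟨W ω, Finset.mem_univ _, h⟩)
    rw [this]
    simp [phi]

lemma ent_pair_comm (A : Ω → α) (B : Ω → β) :
    ent p (fun ω => (A ω, B ω)) = ent p (fun ω => (B ω, A ω)) :=
  ent_comp_inj (fun ω => (B ω, A ω)) (fun t => (t.2, t.1))
    (fun t s h => Prod.ext (congrArg Prod.snd h) (congrArg Prod.fst h))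

lemma ent_triple_rot (A : Ω → α) (B : Ω → β) (C : Ω → γ) :
    ent p (fun ω => (A ω, B ω, C ω)) = ent p (fun ω => (C ω, B ω, A ω)) :=
  ent_comp_inj (fun ω => (C ω, B ω, A ω)) (fun t => (t.2.2, t.2.1, t.1))
    (fun t s h => Prod.ext (congrArg (fun x => x.2.2) h)
      (Prod.ext (congrArg (fun x => x.2.1) h) (congrArg Prod.fst h)))

lemma ent_triple_swap23 (A : Ω → α) (B : Ω → β) (C : Ω → γ) :
    ent p (fun ω => (A ω, C ω, B ω)) = ent p (fun ω => (A ω, B ω, C ω)) :=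
  ent_comp_inj (fun ω => (A ω, B ω, C ω)) (fun t => (t.1, t.2.2, t.2.1))
    (fun t s h => by
      simp only [Prod.mk.injEq] at h
      exact Prod.ext h.1 (Prod.ext h.2.2 h.2.1))

lemma cmi_nonneg (hp : IsPMF p) (X : Ω → α) (Y : Ω → β) (Z : Ω → γ) :
    0 ≤ cmi p X Y Z := by
  have core := cmi_core (fun x y z => pr p (fun ω => (X ω, Y ω, Z ω)) (x, y, z))
    (fun x y z => pr_nonneg hp.1 _ _) ?_
  · unfold cmi
    have h13 : ent p (fun ω => (X ω, Z ω))
        = ∑ x, ∑ z, phi (∑ y, pr p (fun ω => (X ω, Y ω, Z ω)) (x, y, z)) := by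
      rw [ent_def, Fintype.sum_prod_type]
      exact Finset.sum_congr rfl fun x _ => Finset.sum_congr rfl fun z _ => by
        rw [pr_marg_13 X Y Z]
    have h23 : ent p (fun ω => (Y ω, Z ω))
        = ∑ y, ∑ z, phi (∑ x, pr p (fun ω => (X ω, Y ω, Z ω)) (x, y, z)) := by
      rw [ent_def, Fintype.sum_prod_type]
      exact Finset.sum_congr rfl fun y _ => Finset.sum_congr rfl fun z _ => by
        rw [pr_marg_23 X Y Z]
    have h123 : ent p (fun ω => (X ω, Y ω, Z ω))
        = ∑ x, ∑ y, ∑ z, phi (pr p (fun ω => (X ω, Y ω, Z ω)) (x, y, z)) := by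
      rw [ent_def, Fintype.sum_prod_type]
      exact Finset.sum_congr rfl fun x _ => by rw [Fintype.sum_prod_type]
    have h3 : ent p Z
        = ∑ z, phi (∑ x, ∑ y, pr p (fun ω => (X ω, Y ω, Z ω)) (x, y, z)) := by
      rw [ent_def]
      exact Finset.sum_congr rfl fun z _ => by rw [pr_marg_3 X Y Z]
    rw [h13, h23, h123, h3]
    linarith [core]
  · have := sum_pr hp (fun ω => (X ω, Y ω, Z ω))
    rw [Fintype.sum_prod_type] at this
    rw [← this]
    exact Finset.sum_congr rfl fun x _ => by rw [Fintype.sum_prod_type]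

lemma ent_const_fin1 (hp : IsPMF p) : ent p (fun _ : Ω => (0 : Fin 1)) = 0 := by
  rw [ent_def]
  rw [show (Finset.univ : Finset (Fin 1)) = {0} from rfl, Finset.sum_singleton]
  have : pr p (fun _ : Ω => (0 : Fin 1)) 0 = 1 := by
    unfold pr; simp [hp.2]
  rw [this]
  simp [phi]

lemma mi_nonneg (hp : IsPMF p) (X : Ω → α) (Y : Ω → β) : 0 ≤ mi p X Y := by
  have h := cmi_nonneg hp X Y (fun _ => (0 : Fin 1))
  unfold cmi at h
  rw [ent_comp_inj X (fun a => (a, (0 : Fin 1)))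
      (fun a b hab => congrArg Prod.fst hab),
    ent_comp_inj Y (fun a => (a, (0 : Fin 1)))
      (fun a b hab => congrArg Prod.fst hab),
    ent_comp_inj (fun ω => (X ω, Y ω)) (fun t => (t.1, t.2, (0 : Fin 1)))
      (fun t s hts => by
        simp only [Prod.mk.injEq] at hts
        exact Prod.ext hts.1 hts.2.1),
    ent_const_fin1 hp] at h
  unfold mi
  linarith

lemma mi_chain (X : Ω → α) (Y : Ω → β) (W : Ω → γ) :
    mi p X Y = mi p W Y + cmi p X Y W - cmi p W Y X := by
  unfold mi cmi
  rw [ent_pair_comm W Y, ent_pair_comm X W, ent_pair_comm Y X, ent_triple_rot X Y W]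
  ring

lemma markov_cmi (hp : IsPMF p) (A : Ω → α) (B : Ω → β) (C : Ω → γ)
    (h : MarkovChain p A B C) : cmi p A C B = 0 := by
  unfold cmi
  rw [ent_triple_swap23 A B C, ent_pair_comm C B]
  have core := markov_core (fun a b c => pr p (fun ω => (A ω, B ω, C ω)) (a, b, c))
    (fun a b c => pr_nonneg hp.1 _ _) ?_
  · have h12 : ent p (fun ω => (A ω, B ω))
        = ∑ a, ∑ b, phi (∑ c, pr p (fun ω => (A ω, B ω, C ω)) (a, b, c)) := by
      rw [ent_def, Fintype.sum_prod_type]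
      exact Finset.sum_congr rfl fun a _ => Finset.sum_congr rfl fun b _ => by
        rw [pr_marg_12 A B C]
    have h23 : ent p (fun ω => (B ω, C ω))
        = ∑ b, ∑ c, phi (∑ a, pr p (fun ω => (A ω, B ω, C ω)) (a, b, c)) := by
      rw [ent_def, Fintype.sum_prod_type]
      exact Finset.sum_congr rfl fun b _ => Finset.sum_congr rfl fun c _ => by
        rw [pr_marg_23 A B C]
    have h123 : ent p (fun ω => (A ω, B ω, C ω))
        = ∑ a, ∑ b, ∑ c, phi (pr p (fun ω => (A ω, B ω, C ω)) (a, b, c)) := by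
      rw [ent_def, Fintype.sum_prod_type]
      exact Finset.sum_congr rfl fun a _ => by rw [Fintype.sum_prod_type]
    have h2 : ent p B
        = ∑ b, phi (∑ a, ∑ c, pr p (fun ω => (A ω, B ω, C ω)) (a, b, c)) := by
      rw [ent_def]
      exact Finset.sum_congr rfl fun b _ => by rw [pr_marg_2 A B C]
    rw [h12, h23, h123, h2]
    linarith [core]
  · intro a b c
    have := h a b c
    rw [pr_marg_2 A B C, pr_marg_12 A B C, pr_marg_23 A B C] at this
    exact this

lemma condEnt_comp_le (hp : IsPMF p) (Uv : Ω → α) (W : Ω → β) (f : β → δ) :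
    condEnt p Uv W ≤ condEnt p Uv (fun ω => f (W ω)) := by
  have h := cmi_nonneg hp Uv W (fun ω => f (W ω))
  unfold cmi at h
  rw [ent_comp_inj W (fun w => (w, f w)) (fun a b hab => congrArg Prod.fst hab),
    ent_comp_inj (fun ω => (Uv ω, W ω)) (fun t => (t.1, t.2, f t.2))
      (fun t s hts => by
        simp only [Prod.mk.injEq] at hts
        exact Prod.ext hts.1 hts.2.1)] at h
  unfold condEnt
  linarith

end Transfer

/-! ## Statement 8: Fano-type converse bound for a single link with receiver side
information (equations (24)–(29) of the paper). -/

section Stmt8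

variable {Ω : Type} [Fintype Ω] {U V Xc Yc : Type}
  [Fintype U] [Fintype V] [Fintype Xc] [Fintype Yc]

theorem stmt8 (n : ℕ) (hn : 0 < n) (p : Ω → ℝ) (hp : IsPMF p)
    (q : U × V → ℝ) (hq : IsPMF q)
    (U1 : Ω → Fin n → U) (V1 : Ω → Fin n → V)
    (X1 : Ω → Fin n → Xc) (Y1 : Ω → Fin n → Yc)
    -- (U1^n, V1^n) are n i.i.d. copies of a pair with single-letter law q
    (hiid : ∀ (u : Fin n → U) (v : Fin n → V),
      pr p (fun ω => (U1 ω, V1 ω)) (u, v) = ∏ i, q (u i, v i))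
    -- Markov chains U1^n → X1^n → Y1^n and V1^n → U1^n → Y1^n
    (hmc1 : MarkovChain p U1 X1 Y1)
    (hmc2 : MarkovChain p V1 U1 Y1)
    (g : (Fin n → Yc) → (Fin n → V) → Fin n → U) :
    (1 / (n : ℝ)) * mi p X1 Y1 ≥
      condEnt q Prod.fst Prod.snd
        - (1 / (n : ℝ)) * condEnt p U1 (fun ω => g (Y1 ω) (V1 ω)) := by
  classical
  have h5 : (0:ℝ) ≤ cmi p X1 Y1 U1 := cmi_nonneg hp X1 Y1 U1
  have h6 : (0:ℝ) ≤ mi p V1 Y1 := mi_nonneg hp V1 Y1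
  have h1 : cmi p U1 Y1 X1 = 0 := markov_cmi hp U1 X1 Y1 hmc1
  have h2 : cmi p V1 Y1 U1 = 0 := markov_cmi hp V1 U1 Y1 hmc2
  have h3 := mi_chain (p := p) X1 Y1 U1
  have h4 := mi_chain (p := p) U1 Y1 V1
  have h7 : cmi p U1 Y1 V1
      = condEnt p U1 V1 - condEnt p U1 (fun ω => (Y1 ω, V1 ω)) := by
    unfold cmi condEnt
    ring
  have h8 : condEnt p U1 (fun ω => (Y1 ω, V1 ω))
      ≤ condEnt p U1 (fun ω => g (Y1 ω) (V1 ω)) := by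
    have := condEnt_comp_le hp U1 (fun ω => (Y1 ω, V1 ω)) (fun w => g w.1 w.2)
    exact this
  -- Step D : single-letterization of H(U^n | V^n)
  set q2 : V → ℝ := fun b => ∑ a, q (a, b) with hq2def
  have hq2sum : ∑ b, q2 b = 1 := by
    have := hq.2
    rw [Fintype.sum_prod_type] at this
    rw [← this]
    exact Finset.sum_comm
  have eUV : ent p (fun ω => (U1 ω, V1 ω)) = n * ∑ w, phi (q w) := by
    rw [ent_def]
    rw [Finset.sum_congr rfl fun t _ => by rw [show pr p (fun ω => (U1 ω, V1 ω)) t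
      = ∏ i, q (t.1 i, t.2 i) from hiid t.1 t.2]]
    rw [show (∑ t : (Fin n → U) × (Fin n → V), phi (∏ i, q (t.1 i, t.2 i)))
        = ∑ x : Fin n → U × V, phi (∏ i, q (x i)) from
      (Fintype.sum_equiv (Equiv.arrowProdEquivProdArrow (Fin n) (fun _ => U) (fun _ => V))
        (fun x : Fin n → U × V => phi (∏ i, q (x i)))
        (fun t => phi (∏ i, q (t.1 i, t.2 i))) (fun x => rfl)).symm]
    exact sum_phi_prod n q hq.2
  have eV : ent p V1 = n * ∑ b, phi (q2 b) := by
    rw [ent_def]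
    have hprV : ∀ v, pr p V1 v = ∏ i, q2 (v i) := by
      intro v
      rw [pr_snd U1 V1 v]
      rw [Finset.sum_congr rfl fun u _ => hiid u v]
      rw [show (∏ i, q2 (v i)) = ∑ u : Fin n → U, ∏ i, q (u i, v i) from
        Fintype.prod_sum (fun i a => q (a, v i))]
    rw [Finset.sum_congr rfl fun v _ => by rw [hprV v]]
    exact sum_phi_prod n q2 hq2sum
  have eCq : condEnt q Prod.fst Prod.snd = (∑ w, phi (q w)) - ∑ b, phi (q2 b) := by
    unfold condEnt
    rw [ent_def, ent_def]
    have hq1 : ∀ t, pr q (fun w : U × V => (w.1, w.2)) t = q t := by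
      intro t
      unfold pr
      simp [Finset.sum_ite_eq']
    have hq2' : ∀ b, pr q (Prod.snd : U × V → V) b = q2 b := by
      intro b
      unfold pr
      rw [Fintype.sum_prod_type]
      simp [Finset.sum_ite_eq', hq2def]
    have e1 : ∑ t : U × V, phi (pr q (fun w : U × V => (w.1, w.2)) t) = ∑ w, phi (q w) :=
      Finset.sum_congr rfl fun t _ => by rw [hq1 t]
    have e2 : ∑ b, phi (pr q (Prod.snd : U × V → V) b) = ∑ b, phi (q2 b) :=
      Finset.sum_congr rfl fun b _ => by rw [hq2' b]
    rw [e1, e2]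
  have h9 : condEnt p U1 V1 = n * condEnt q Prod.fst Prod.snd := by
    rw [eCq, show condEnt p U1 V1 = ent p (fun ω => (U1 ω, V1 ω)) - ent p V1 from rfl,
      eUV, eV]
    ring
  -- final arithmetic
  have hn' : (0:ℝ) < (n : ℝ) := by exact_mod_cast hn
  have hmain : (n : ℝ) * condEnt q Prod.fst Prod.snd
      - condEnt p U1 (fun ω => g (Y1 ω) (V1 ω)) ≤ mi p X1 Y1 := by linarith
  rw [ge_iff_le]
  have e : condEnt q Prod.fst Prod.snd
      - 1 / (n : ℝ) * condEnt p U1 (fun ω => g (Y1 ω) (V1 ω))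
      = 1 / (n : ℝ) * ((n : ℝ) * condEnt q Prod.fst Prod.snd
        - condEnt p U1 (fun ω => g (Y1 ω) (V1 ω))) := by
    field_simp
  rw [e]
  exact mul_le_mul_of_nonneg_left hmain (by positivity)


end Stmt8

end Paper
end

section
/- Let a Z-interference channel satisfy Condition 1. Let (W_1s, X1^n) be arbitrary finitely-valued jointly distributed random variables, let X2^n be finitely-valued and independent of (W_1s, X1^n), let Y2^n be generated from (X1^n, X2^n) by the memoryless channel p(y2|x1,x2) applied componentwise, and let T^n be generated from X1^n by the memoryless channel Vhat2(t|x1) := p(y2 = t | x1, xbar2) applied componentwise, for a fixed element xbar2 of X2 (with Y2^n and T^n conditionally independent of everything else given the channel inputs). Then H(Y2^n | X2^n, W_1s) = H(T^n | W_1s). -/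
open Finset Real Filter
open scoped Classical

namespace Paper

variable {Ω : Type*} [Fintype Ω]

section ZChannel

variable {X1 X2 Y1 Y2 : Type} [Fintype X1] [Fintype X2] [Fintype Y1] [Fintype Y2]

/-- `H(Y_2^n | X_2^n = x_2^n)`: the output entropy of the `n`-letter channel
`p(y_2^n|x_1^n, x_2^n)` when `X_1^n ~ μ` and the second input is fixed to `x_2^n`. -/
noncomputable def entY2n (ch2 : X1 × X2 → Y2 → ℝ) (n : ℕ)
    (μ : (Fin n → X1) → ℝ) (x2 : Fin n → X2) : ℝ :=
  ent (fun w : (Fin n → X1) × (Fin n → Y2) => μ w.1 * ∏ i, ch2 (w.1 i, x2 i) (w.2 i)) Prod.snd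

/-- Condition 1: for every `n` and every input distribution `p(x_1^n)`,
`H(Y_2^n|X_2^n = x_2^n)` does not depend on `x_2^n`. -/
def Cond1 (ch2 : X1 × X2 → Y2 → ℝ) : Prop :=
  ∀ (n : ℕ) (μ : (Fin n → X1) → ℝ), IsPMF μ →
    ∀ x2 x2' : Fin n → X2, entY2n ch2 n μ x2 = entY2n ch2 n μ x2'

/-- The single-letter output entropy `H(Y_2)` for independent inputs `p(x_1) p(x_2)`. -/
noncomputable def entY2 (ch2 : X1 × X2 → Y2 → ℝ) (p1 : X1 → ℝ) (p2 : X2 → ℝ) : ℝ :=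
  ent (fun w : X1 × X2 × Y2 => p1 w.1 * p2 w.2.1 * ch2 (w.1, w.2.1) w.2.2) (fun w => w.2.2)

/-- `τ = max_{p(x_1) p(x_2)} H(Y_2)`. -/
noncomputable def tau (ch2 : X1 × X2 → Y2 → ℝ) : ℝ :=
  sSup { t | ∃ p1 p2, IsPMF p1 ∧ IsPMF p2 ∧ t = entY2 ch2 p1 p2 }

/-- Condition 2, with witness `p*`: for every `p(x_1)`, the output entropy `H(Y_2)` under
`p(x_1) p*(x_2)` equals `τ`. -/
def Cond2 (ch2 : X1 × X2 → Y2 → ℝ) (pstar : X2 → ℝ) : Prop :=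
  IsPMF pstar ∧ ∀ p1 : X1 → ℝ, IsPMF p1 → entY2 ch2 p1 pstar = tau ch2

end ZChannel


/-! ### Auxiliary lemmas for the proof of `stmt14` -/

section Stmt14Aux

lemma aux_mul_logb_mul (x y : ℝ) :
    (x * y) * Real.logb 2 (x * y)
      = y * (x * Real.logb 2 x) + x * (y * Real.logb 2 y) := by
  rcases eq_or_ne x 0 with hx | hx
  · simp [hx]
  rcases eq_or_ne y 0 with hy | hy
  · simp [hy]
  rw [Real.logb, Real.logb, Real.logb, Real.log_mul hx hy]
  ring

/-- Entropy of a (sub)probability vector. -/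
noncomputable def Hf {α : Type*} [Fintype α] (f : α → ℝ) : ℝ :=
  ∑ x, -(f x * Real.logb 2 (f x))

lemma ent_eq_Hf {Ω : Type*} [Fintype Ω] {α : Type*} [Fintype α] (p : Ω → ℝ) (X : Ω → α) :
    ent p X = Hf (fun x => pr p X x) := rfl

lemma Hf_chain {α β : Type*} [Fintype α] [Fintype β] (q : β → ℝ) (f : β → α → ℝ)
    (h : ∀ b, q b = 0 ∨ ∑ a, f b a = 1) :
    Hf (fun p : α × β => q p.2 * f p.2 p.1) = Hf q + ∑ b, q b * Hf (f b) := by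
  have lhs : Hf (fun p : α × β => q p.2 * f p.2 p.1)
      = ∑ b, ∑ a, -(q b * f b a * Real.logb 2 (q b * f b a)) := by
    rw [Hf, Fintype.sum_prod_type]
    exact Finset.sum_comm
  rw [lhs, Hf, ← Finset.sum_add_distrib]
  refine Finset.sum_congr rfl fun b _ => ?_
  rcases h b with hb | hb
  · simp [hb, Hf]
  · have key : ∀ a, -(q b * f b a * Real.logb 2 (q b * f b a))
        = -(f b a * (q b * Real.logb 2 (q b))) + q b * -(f b a * Real.logb 2 (f b a)) := by
      intro a; rw [aux_mul_logb_mul]; ring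
    simp_rw [key]
    rw [Finset.sum_add_distrib]
    have h1 : ∑ x : α, -(f b x * (q b * Real.logb 2 (q b)))
        = -((∑ x : α, f b x) * (q b * Real.logb 2 (q b))) := by
      rw [Finset.sum_mul, Finset.sum_neg_distrib]
    have h2 : ∑ x : α, q b * -(f b x * Real.logb 2 (f b x))
        = q b * ∑ x : α, -(f b x * Real.logb 2 (f b x)) := by
      rw [Finset.mul_sum]
    rw [h1, h2, hb, Hf]
    ring

variable {X1 X2 Y2 Wt : Type} [Fintype X1] [Fintype X2] [Fintype Y2] [Fintype Wt]

lemma aux_sum_kernel {ch2 : X1 × X2 → Y2 → ℝ} (hch2 : IsKernel ch2) {n : ℕ}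
    (x1 : Fin n → X1) (c : Fin n → X2) :
    ∑ t : Fin n → Y2, ∏ i, ch2 (x1 i, c i) (t i) = 1 := by
  rw [← Fintype.piFinset_univ, ← Finset.prod_univ_sum]
  simp [(hch2 _).2]

/-- Marginal of `W` under the joint μ. -/
noncomputable def Pfun {n : ℕ} (μ : Wt × (Fin n → X1) → ℝ) : Wt → ℝ :=
  fun w => ∑ x1, μ (w, x1)

/-- Unnormalized joint density of `(Y2^n)` with `W = w`, `X2^n = x2`. -/
noncomputable def gfun (ch2 : X1 × X2 → Y2 → ℝ) {n : ℕ} (μ : Wt × (Fin n → X1) → ℝ) :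
    Wt → (Fin n → X2) → (Fin n → Y2) → ℝ :=
  fun w x2 y => ∑ x1, μ (w, x1) * ∏ i, ch2 (x1 i, x2 i) (y i)

lemma pr_snd_s14 (n : ℕ) (ch : Fin n → X1 → Y2 → ℝ) (μw : (Fin n → X1) → ℝ) (y : Fin n → Y2) :
    pr (fun w : (Fin n → X1) × (Fin n → Y2) => μw w.1 * ∏ i, ch i (w.1 i) (w.2 i))
      Prod.snd y = ∑ x1, μw x1 * ∏ i, ch i (x1 i) (y i) := by
  simp only [pr, Fintype.sum_prod_type]
  simp only [Finset.sum_ite_eq', Finset.mem_univ, if_true]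

end Stmt14Aux

/-! ## Statement 14: under Condition 1, `H(Y_2^n | X_2^n, W_1s) = H(T^n | W_1s)`
(equations (118)–(121) of the paper). -/

section Stmt14

variable {X1 X2 Y2 Wt : Type} [Fintype X1] [Fintype X2] [Fintype Y2] [Fintype Wt]

/-- Joint law of `(W_1s, X_1^n, X_2^n, Y_2^n, T^n)`, where `X_2^n` is independent of
`(W_1s, X_1^n)`, `Y_2^n` is the memoryless output of `p(y_2|x_1,x_2)`, and `T^n` is the
memoryless output of `Vhat2(t|x_1) = p(y_2 = t|x_1, x̄_2)`. -/
noncomputable def jointT (ch2 : X1 × X2 → Y2 → ℝ) (xbar2 : X2) (n : ℕ)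
    (μ : Wt × (Fin n → X1) → ℝ) (ν : (Fin n → X2) → ℝ) :
    Wt × (Fin n → X1) × (Fin n → X2) × (Fin n → Y2) × (Fin n → Y2) → ℝ :=
  fun (w, x1, x2, y2, t) =>
    μ (w, x1) * ν x2 * (∏ i, ch2 (x1 i, x2 i) (y2 i)) * ∏ i, ch2 (x1 i, xbar2) (t i)

lemma pr_Y2X2W (ch2 : X1 × X2 → Y2 → ℝ) (hch2 : IsKernel ch2) (xbar2 : X2) (n : ℕ)
    (μ : Wt × (Fin n → X1) → ℝ) (ν : (Fin n → X2) → ℝ)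
    (y : Fin n → Y2) (x2 : Fin n → X2) (w : Wt) :
    pr (jointT ch2 xbar2 n μ ν)
      (fun ω : Wt × (Fin n → X1) × (Fin n → X2) × (Fin n → Y2) × (Fin n → Y2) =>
        (ω.2.2.2.1, (ω.2.2.1, ω.1))) (y, (x2, w))
    = ν x2 * ∑ x1, μ (w, x1) * ∏ i, ch2 (x1 i, x2 i) (y i) := by
  simp only [pr, jointT, Fintype.sum_prod_type, Prod.mk.injEq, ite_and]
  simp only [Finset.sum_ite_irrel, Finset.sum_const_zero, Finset.sum_ite_eq',
    Finset.mem_univ, if_true]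
  simp_rw [← Finset.mul_sum, aux_sum_kernel hch2, mul_one, Finset.mul_sum]
  exact Finset.sum_congr rfl fun x _ => by ring

lemma pr_X2W (ch2 : X1 × X2 → Y2 → ℝ) (hch2 : IsKernel ch2) (xbar2 : X2) (n : ℕ)
    (μ : Wt × (Fin n → X1) → ℝ) (ν : (Fin n → X2) → ℝ)
    (x2 : Fin n → X2) (w : Wt) :
    pr (jointT ch2 xbar2 n μ ν)
      (fun ω : Wt × (Fin n → X1) × (Fin n → X2) × (Fin n → Y2) × (Fin n → Y2) =>
        (ω.2.2.1, ω.1)) (x2, w)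
    = ν x2 * ∑ x1, μ (w, x1) := by
  simp only [pr, jointT, Fintype.sum_prod_type, Prod.mk.injEq, ite_and]
  simp only [Finset.sum_ite_irrel, Finset.sum_const_zero, Finset.sum_ite_eq',
    Finset.mem_univ, if_true]
  rw [Finset.mul_sum]
  refine Finset.sum_congr rfl fun x1 _ => ?_
  have h1 : ∀ (y' : Fin n → Y2) (t' : Fin n → Y2),
      (μ (w, x1) * ν x2 * ∏ i, ch2 (x1 i, x2 i) (y' i)) * ∏ i, ch2 (x1 i, xbar2) (t' i)
      = (μ (w, x1) * ν x2) * ((∏ i, ch2 (x1 i, x2 i) (y' i)) * ∏ i, ch2 (x1 i, xbar2) (t' i)) := by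
    intros; ring
  simp_rw [h1, ← Finset.mul_sum, aux_sum_kernel hch2, mul_one, aux_sum_kernel hch2, mul_one]
  ring

lemma pr_TW (ch2 : X1 × X2 → Y2 → ℝ) (hch2 : IsKernel ch2) (xbar2 : X2) (n : ℕ)
    (μ : Wt × (Fin n → X1) → ℝ) (ν : (Fin n → X2) → ℝ) (hν : IsPMF ν)
    (t : Fin n → Y2) (w : Wt) :
    pr (jointT ch2 xbar2 n μ ν)
      (fun ω : Wt × (Fin n → X1) × (Fin n → X2) × (Fin n → Y2) × (Fin n → Y2) =>
        (ω.2.2.2.2, ω.1)) (t, w)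
    = ∑ x1, μ (w, x1) * ∏ i, ch2 (x1 i, xbar2) (t i) := by
  simp only [pr, jointT, Fintype.sum_prod_type, Prod.mk.injEq, ite_and]
  simp only [Finset.sum_ite_irrel, Finset.sum_const_zero, Finset.sum_ite_eq',
    Finset.mem_univ, if_true]
  refine Finset.sum_congr rfl fun x1 _ => ?_
  have h1 : ∀ (x2' : Fin n → X2) (y' : Fin n → Y2),
      μ (w, x1) * ν x2' * (∏ i, ch2 (x1 i, x2' i) (y' i)) * ∏ i, ch2 (x1 i, xbar2) (t i)
      = (μ (w, x1) * ∏ i, ch2 (x1 i, xbar2) (t i)) * (ν x2' * ∏ i, ch2 (x1 i, x2' i) (y' i)) := by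
    intros; ring
  simp_rw [h1, ← Finset.mul_sum, aux_sum_kernel hch2, mul_one, hν.2]
  rw [mul_one]

lemma pr_Wm (ch2 : X1 × X2 → Y2 → ℝ) (hch2 : IsKernel ch2) (xbar2 : X2) (n : ℕ)
    (μ : Wt × (Fin n → X1) → ℝ) (ν : (Fin n → X2) → ℝ) (hν : IsPMF ν)
    (w : Wt) :
    pr (jointT ch2 xbar2 n μ ν)
      (fun ω : Wt × (Fin n → X1) × (Fin n → X2) × (Fin n → Y2) × (Fin n → Y2) =>
        ω.1) w
    = ∑ x1, μ (w, x1) := by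
  simp only [pr, jointT, Fintype.sum_prod_type, Prod.mk.injEq, ite_and]
  simp only [Finset.sum_ite_irrel, Finset.sum_const_zero, Finset.sum_ite_eq',
    Finset.mem_univ, if_true]
  refine Finset.sum_congr rfl fun x1 _ => ?_
  have h1 : ∀ (x2' : Fin n → X2) (y' : Fin n → Y2) (t' : Fin n → Y2),
      μ (w, x1) * ν x2' * (∏ i, ch2 (x1 i, x2' i) (y' i)) * ∏ i, ch2 (x1 i, xbar2) (t' i)
      = μ (w, x1) * (ν x2' * ((∏ i, ch2 (x1 i, x2' i) (y' i)) * ∏ i, ch2 (x1 i, xbar2) (t' i))) := by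
    intros; ring
  simp_rw [h1, ← Finset.mul_sum, aux_sum_kernel hch2, mul_one, aux_sum_kernel hch2, mul_one,
    hν.2]
  rw [mul_one]


theorem stmt14 (ch2 : X1 × X2 → Y2 → ℝ) (hch2 : IsKernel ch2) (hc1 : Cond1 ch2)
    (xbar2 : X2) (n : ℕ)
    (μ : Wt × (Fin n → X1) → ℝ) (ν : (Fin n → X2) → ℝ)
    (hμ : IsPMF μ) (hν : IsPMF ν) :
    (let p := jointT ch2 xbar2 n μ ν
     let vW := fun (ω : Wt × (Fin n → X1) × (Fin n → X2) × (Fin n → Y2) × (Fin n → Y2)) =>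
       ω.1
     let vX2 := fun (ω : Wt × (Fin n → X1) × (Fin n → X2) × (Fin n → Y2) × (Fin n → Y2)) =>
       ω.2.2.1
     let vY2 := fun (ω : Wt × (Fin n → X1) × (Fin n → X2) × (Fin n → Y2) × (Fin n → Y2)) =>
       ω.2.2.2.1
     let vT := fun (ω : Wt × (Fin n → X1) × (Fin n → X2) × (Fin n → Y2) × (Fin n → Y2)) =>
       ω.2.2.2.2
     condEnt p vY2 (fun ω => (vX2 ω, vW ω)) = condEnt p vT vW) := by
  classical
  intro p vW vX2 vY2 vT
  -- abbreviations
  set P : Wt → ℝ := fun w => ∑ x1, μ (w, x1) with hPdef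
  set g : Wt → (Fin n → X2) → (Fin n → Y2) → ℝ :=
    fun w x2 y => ∑ x1, μ (w, x1) * ∏ i, ch2 (x1 i, x2 i) (y i) with hgdef
  have hμ0 : ∀ w x1, P w = 0 → μ (w, x1) = 0 := by
    intro w x1 h
    exact (Finset.sum_eq_zero_iff_of_nonneg (fun x1' _ => hμ.1 (w, x1'))).1 h x1
      (Finset.mem_univ _)
  have hg0 : ∀ w x2 y, P w = 0 → g w x2 y = 0 := by
    intro w x2 y h
    exact Finset.sum_eq_zero fun x1 _ => by rw [hμ0 w x1 h, zero_mul]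
  have hgsum : ∀ w x2, ∑ y, g w x2 y = P w := by
    intro w x2
    rw [hgdef, hPdef]
    rw [Finset.sum_comm]
    refine Finset.sum_congr rfl fun x1 _ => ?_
    rw [← Finset.mul_sum, aux_sum_kernel hch2, mul_one]
  -- the conditional distributions
  set q : (Fin n → X2) × Wt → ℝ := fun b => ν b.1 * P b.2 with hqdef
  set f : (Fin n → X2) × Wt → (Fin n → Y2) → ℝ :=
    fun b y => g b.2 b.1 y / P b.2 with hfdef
  set f' : Wt → (Fin n → Y2) → ℝ :=
    fun w t => g w (fun _ => xbar2) t / P w with hf'def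
  have hcond : ∀ b : (Fin n → X2) × Wt, q b = 0 ∨ ∑ y, f b y = 1 := by
    intro b
    rcases eq_or_ne (P b.2) 0 with h | h
    · left; rw [hqdef]; simp [h]
    · right
      rw [hfdef]
      simp only
      rw [← Finset.sum_div, hgsum, div_self h]
  have hcond' : ∀ w : Wt, P w = 0 ∨ ∑ t, f' w t = 1 := by
    intro w
    rcases eq_or_ne (P w) 0 with h | h
    · left; exact h
    · right
      rw [hf'def]
      simp only
      rw [← Finset.sum_div, hgsum, div_self h]
  -- the four entropies
  show ent (jointT ch2 xbar2 n μ ν)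
      (fun ω : Wt × (Fin n → X1) × (Fin n → X2) × (Fin n → Y2) × (Fin n → Y2) =>
        (ω.2.2.2.1, (ω.2.2.1, ω.1)))
    - ent (jointT ch2 xbar2 n μ ν)
      (fun ω : Wt × (Fin n → X1) × (Fin n → X2) × (Fin n → Y2) × (Fin n → Y2) =>
        (ω.2.2.1, ω.1))
    = ent (jointT ch2 xbar2 n μ ν)
      (fun ω : Wt × (Fin n → X1) × (Fin n → X2) × (Fin n → Y2) × (Fin n → Y2) =>
        (ω.2.2.2.2, ω.1))
    - ent (jointT ch2 xbar2 n μ ν)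
      (fun ω : Wt × (Fin n → X1) × (Fin n → X2) × (Fin n → Y2) × (Fin n → Y2) =>
        ω.1)
  have e1 : ent (jointT ch2 xbar2 n μ ν)
      (fun ω : Wt × (Fin n → X1) × (Fin n → X2) × (Fin n → Y2) × (Fin n → Y2) =>
        (ω.2.2.2.1, (ω.2.2.1, ω.1)))
      = Hf q + ∑ b, q b * Hf (f b) := by
    rw [ent_eq_Hf]
    have harg : (fun z : (Fin n → Y2) × ((Fin n → X2) × Wt) =>
        pr (jointT ch2 xbar2 n μ ν)
          (fun ω : Wt × (Fin n → X1) × (Fin n → X2) × (Fin n → Y2) × (Fin n → Y2) =>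
            (ω.2.2.2.1, (ω.2.2.1, ω.1))) z)
        = fun z : (Fin n → Y2) × ((Fin n → X2) × Wt) => q z.2 * f z.2 z.1 := by
      funext z
      obtain ⟨y, x2, w⟩ := z
      rw [pr_Y2X2W ch2 hch2 xbar2 n μ ν y x2 w]
      show ν x2 * g w x2 y = (ν x2 * P w) * (g w x2 y / P w)
      rcases eq_or_ne (P w) 0 with h | h
      · rw [hg0 w x2 y h, h]; ring
      · field_simp
    rw [harg, Hf_chain q f hcond]
  have e2 : ent (jointT ch2 xbar2 n μ ν)
      (fun ω : Wt × (Fin n → X1) × (Fin n → X2) × (Fin n → Y2) × (Fin n → Y2) =>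
        (ω.2.2.1, ω.1))
      = Hf q := by
    rw [ent_eq_Hf]
    congr 1
    funext b
    obtain ⟨x2, w⟩ := b
    exact pr_X2W ch2 hch2 xbar2 n μ ν x2 w
  have e3 : ent (jointT ch2 xbar2 n μ ν)
      (fun ω : Wt × (Fin n → X1) × (Fin n → X2) × (Fin n → Y2) × (Fin n → Y2) =>
        (ω.2.2.2.2, ω.1))
      = Hf P + ∑ w, P w * Hf (f' w) := by
    rw [ent_eq_Hf]
    have harg : (fun z : (Fin n → Y2) × Wt =>
        pr (jointT ch2 xbar2 n μ ν)
          (fun ω : Wt × (Fin n → X1) × (Fin n → X2) × (Fin n → Y2) × (Fin n → Y2) =>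
            (ω.2.2.2.2, ω.1)) z)
        = fun z : (Fin n → Y2) × Wt => P z.2 * f' z.2 z.1 := by
      funext z
      obtain ⟨t, w⟩ := z
      rw [pr_TW ch2 hch2 xbar2 n μ ν hν t w]
      show g w (fun _ => xbar2) t = P w * (g w (fun _ => xbar2) t / P w)
      rcases eq_or_ne (P w) 0 with h | h
      · rw [hg0 w _ t h, h]; ring
      · field_simp
    rw [harg, Hf_chain P f' hcond']
  have e4 : ent (jointT ch2 xbar2 n μ ν)
      (fun ω : Wt × (Fin n → X1) × (Fin n → X2) × (Fin n → Y2) × (Fin n → Y2) =>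
        ω.1)
      = Hf P := by
    rw [ent_eq_Hf]
    congr 1
    funext w
    exact pr_Wm ch2 hch2 xbar2 n μ ν hν w
  rw [e1, e2, e3, e4]
  have main : ∑ b, q b * Hf (f b) = ∑ w, P w * Hf (f' w) := by
    -- the bridge: Condition 1 for the conditional distribution of X1^n given W = w
    have bridge : ∀ (w : Wt) (x2 : Fin n → X2),
        P w * Hf (fun y => g w x2 y / P w) = P w * Hf (f' w) := by
      intro w x2
      rcases eq_or_ne (P w) 0 with h | h
      · rw [h, zero_mul, zero_mul]
      · have hPpos : 0 < P w :=
          lt_of_le_of_ne (Finset.sum_nonneg fun x1 _ => hμ.1 (w, x1)) (Ne.symm h)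
        set μw : (Fin n → X1) → ℝ := fun x1 => μ (w, x1) / P w with hμwdef
        have hμwpmf : IsPMF μw := by
          constructor
          · intro x1
            exact div_nonneg (hμ.1 (w, x1)) hPpos.le
          · rw [hμwdef]
            simp only
            rw [← Finset.sum_div, div_self h]
        have key : ∀ x2' : Fin n → X2,
            entY2n ch2 n μw x2' = Hf (fun y => g w x2' y / P w) := by
          intro x2'
          rw [entY2n, ent_eq_Hf]
          congr 1
          funext y
          have hps := pr_snd_s14 n (fun i a b => ch2 (a, x2' i) b) μw y
          rw [show pr (fun w' : (Fin n → X1) × (Fin n → Y2) =>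
              μw w'.1 * ∏ i, ch2 (w'.1 i, x2' i) (w'.2 i)) Prod.snd y
            = ∑ x1, μw x1 * ∏ i, ch2 (x1 i, x2' i) (y i) from hps]
          rw [hμwdef, hgdef]
          simp only
          rw [Finset.sum_div]
          exact Finset.sum_congr rfl fun x1 _ => div_mul_eq_mul_div _ _ _
        have hent := hc1 n μw hμwpmf x2 (fun _ => xbar2)
        rw [key x2, key (fun _ => xbar2)] at hent
        rw [hent]
    rw [Fintype.sum_prod_type]
    have step : ∀ x2 : Fin n → X2,
        ∑ w, q (x2, w) * Hf (f (x2, w)) = ν x2 * ∑ w, P w * Hf (f' w) := by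
      intro x2
      rw [Finset.mul_sum]
      refine Finset.sum_congr rfl fun w _ => ?_
      have hrw : q (x2, w) * Hf (f (x2, w)) = ν x2 * (P w * Hf (fun y => g w x2 y / P w)) := by
        rw [hqdef, hfdef]; ring_nf; simp_rw [mul_comm (P w)⁻¹]
      rw [hrw, bridge w x2]
    simp_rw [step]
    rw [← Finset.sum_mul, hν.2, one_mul]
  rw [main]
  ring


end Stmt14

end Paper
end
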